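/- The plane L×L is not hyperbolic (no limiting parallel ray exists): let ε be a positive infinitesimal hyperreal and A = (0, ε). There is no hyperreal δ > 0 such that the ray from A with slope δ misses the line y = 0 in L×L (i.e., ε/δ is infinite) while every ray from A lying strictly inside the angle it forms with the downward ray AO meets y = 0 at a limited point; formally, for every δ > 0 with ε/δ infinite there exists μ > δ with ε/μ infinite. -/

import Mathlib

/-- The plane `L × L` is not hyperbolic: there is no limiting parallel ray
from `A = (0, ε)` to the line `y = 0`. For every slope `δ > 0` whose ray
misses `y = 0` in `L × L` (i.e. `ε/δ` is infinite) there is a steeper slope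
`μ > δ` whose ray still misses `y = 0` in `L × L`. -/
theorem no_limiting_parallel_ray (ε : ℝ*) (hε : 0 < ε)
    (hinf : ε.Infinitesimal) :
    ∀ δ : ℝ*, 0 < δ → (ε / δ).Infinite →
      ∃ μ : ℝ*, δ < μ ∧ (ε / μ).Infinite := by
  intro δ hδ hεδ
  refine ⟨2 * δ, by linarith, ?_⟩
  have h2 : ε / (2 * δ) = (ε / δ) / 2 := by ring
  rw [h2]
  rw [Hyperreal.infinite_iff_infinitesimal_inv (div_pos (div_pos hε hδ) two_pos).ne']
  rw [Hyperreal.infinite_iff_infinitesimal_inv (div_pos hε hδ).ne'] at hεδ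
  have h3 : ((ε / δ) / 2)⁻¹ = ((2:ℝ):ℝ*) * (ε / δ)⁻¹ := by
    push_cast; field_simp
  rw [h3]
  have h4 := (Hyperreal.isSt_refl_real 2).mul hεδ
  simp at h4 ⊢
  exact h4
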